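/- If x ∈ Sol(y,A) has support S ≠ ∅ and A_Sᵀ A_S is not invertible, then the LASSO problem has multiple minimisers: there exists x̃ ∈ Sol(y,A) with x̃ ≠ x. Consequently stsp(y,A) = 0. -/

import Mathlib

open Matrix BigOperators

noncomputable def lassoObj {m N : ℕ} (lam : ℝ) (y : Fin m → ℝ)
    (A : Matrix (Fin m) (Fin N) ℝ) (x : Fin N → ℝ) : ℝ :=
  (∑ i, (A.mulVec x i - y i) ^ 2) + lam * ∑ j, |x j|

def lassoSol {m N : ℕ} (lam : ℝ) (y : Fin m → ℝ)
    (A : Matrix (Fin m) (Fin N) ℝ) : Set (Fin N → ℝ) :=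
  {x | ∀ z, lassoObj lam y A x ≤ lassoObj lam y A z}

/-- The stability support: the distance to support change. -/
noncomputable def stsp {m N : ℕ} (lam : ℝ) (y : Fin m → ℝ)
    (A : Matrix (Fin m) (Fin N) ℝ) : ℝ :=
  sInf {δ : ℝ | 0 ≤ δ ∧
    ∃ (yt : Fin m → ℝ) (At : Matrix (Fin m) (Fin N) ℝ)
      (x xt : Fin N → ℝ), x ∈ lassoSol lam y A ∧ xt ∈ lassoSol lam yt At ∧
      (∀ i, |yt i - y i| ≤ δ) ∧ (∀ i j, |A i j - At i j| ≤ δ) ∧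
      Function.support x ≠ Function.support xt}

/-- The column submatrix of `A` with columns indexed by the finset `S`. -/
def colSub {m N : ℕ} (A : Matrix (Fin m) (Fin N) ℝ) (S : Finset (Fin N)) :
    Matrix (Fin m) {j // j ∈ S} ℝ :=
  A.submatrix id (fun j : {j // j ∈ S} => (j : Fin N))
/-- If the Gram matrix on a nonempty support of a minimiser is not invertible,
then there are multiple minimisers and the stability support vanishes. -/
theorem lasso_multiple_of_singular_gram {m N : ℕ} (lam : ℝ) (hlam : 0 < lam)
    (y : Fin m → ℝ) (A : Matrix (Fin m) (Fin N) ℝ)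
    (x : Fin N → ℝ) (hx : x ∈ lassoSol lam y A)
    (S : Finset (Fin N)) (hS : ∀ j, j ∈ S ↔ x j ≠ 0) (hSne : S.Nonempty)
    (hGram : ¬ IsUnit ((colSub A S)ᵀ * colSub A S)) :
    (∃ xt ∈ lassoSol lam y A, xt ≠ x) ∧ stsp lam y A = 0 := by
  classical
  -- a nonzero kernel vector of the Gram matrix
  have hdet : ((colSub A S)ᵀ * colSub A S).det = 0 := by
    by_contra h
    exact hGram ((Matrix.isUnit_iff_isUnit_det _).mpr (isUnit_iff_ne_zero.mpr h))
  obtain ⟨vS, hvS, hGv⟩ := Matrix.exists_mulVec_eq_zero_iff.mpr hdet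
  -- the kernel vector is also in the kernel of A_S
  have hASv : (colSub A S).mulVec vS = 0 := by
    have h1 : vS ⬝ᵥ (((colSub A S)ᵀ * colSub A S) *ᵥ vS) = 0 := by
      rw [hGv]; exact dotProduct_zero vS
    rw [← Matrix.mulVec_mulVec, Matrix.dotProduct_mulVec, Matrix.vecMul_transpose] at h1
    have hdot : ∑ i, (colSub A S).mulVec vS i * (colSub A S).mulVec vS i = 0 := by
      simpa [dotProduct] using h1
    funext i
    exact mul_self_eq_zero.mp
      ((Finset.sum_eq_zero_iff_of_nonneg (fun i _ => mul_self_nonneg _)).mp hdot i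
        (Finset.mem_univ i))
  -- extend to a vector on Fin N supported in S
  set v : Fin N → ℝ := fun j => if h : j ∈ S then vS ⟨j, h⟩ else 0 with hvdef
  have hvS_eq : ∀ j : {j // j ∈ S}, v j = vS j := by
    intro j; simp [hvdef]
  have hv_off : ∀ j, j ∉ S → v j = 0 := by intro j hj; simp [hvdef, hj]
  have hAv : ∀ i, A.mulVec v i = 0 := by
    intro i
    have h1 : A.mulVec v i = ∑ j ∈ S, A i j * v j := by
      simp only [Matrix.mulVec, dotProduct]
      exact (Finset.sum_subset (Finset.subset_univ S)
        (fun j _ hj => by rw [hv_off j hj, mul_zero])).symm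
    have h2 : (colSub A S).mulVec vS i = ∑ j ∈ S, A i j * v j := by
      simp only [Matrix.mulVec, dotProduct]
      rw [← Finset.sum_coe_sort S (fun j => A i j * v j)]
      apply Finset.sum_congr rfl
      intro j _
      rw [hvS_eq j]
      rfl
    rw [h1, ← h2]
    exact congrFun hASv i
  have hvne : ∃ j₀ : Fin N, v j₀ ≠ 0 := by
    obtain ⟨j, hj⟩ := Function.ne_iff.mp hvS
    exact ⟨j, by rw [hvS_eq j]; exact hj⟩
  -- signs
  set s : Fin N → ℝ := fun j => if 0 < x j then 1 else -1 with hsdef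
  have hss : ∀ j, s j = 1 ∨ s j = -1 := by
    intro j; by_cases h : 0 < x j
    · left; simp [hsdef, h]
    · right; simp [hsdef, h]
  have hsx : ∀ j ∈ S, s j * x j = |x j| := by
    intro j hj
    have hxj : x j ≠ 0 := (hS j).mp hj
    by_cases h : 0 < x j
    · simp [hsdef, h, abs_of_pos h]
    · have hneg : x j < 0 := lt_of_le_of_ne (not_lt.mp h) hxj
      simp [hsdef, h, abs_of_neg hneg]
  set c : ℝ := ∑ j, s j * v j with hcdef
  set T : Finset (Fin N) := S.filter (fun j => v j ≠ 0) with hTdef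
  have hTmem : ∀ j, j ∈ T ↔ (j ∈ S ∧ v j ≠ 0) := by
    intro j; simp [hTdef]
  have hcT : c = ∑ j ∈ T, s j * v j := by
    rw [hcdef]
    symm
    apply Finset.sum_subset (Finset.subset_univ T)
    intro j _ hj
    by_cases hjS : j ∈ S
    · have : v j = 0 := by
        by_contra hv
        exact hj ((hTmem j).mpr ⟨hjS, hv⟩)
      rw [this, mul_zero]
    · rw [hv_off j hjS, mul_zero]
  set σ : ℝ := if c ≤ 0 then 1 else -1 with hσdef
  have hσc : σ * c ≤ 0 := by
    by_cases h : c ≤ 0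
    · simp [hσdef, h]
    · simp only [hσdef, if_neg h]
      push_neg at h
      linarith
  have hσσ : σ * σ = 1 := by
    by_cases h : c ≤ 0 <;> simp [hσdef, h]
  -- crossing points
  set e : Fin N → ℝ := fun j => -x j / v j with hedef
  have hprod : ∀ j ∈ T, (σ * e j) * (σ * (s j * v j)) = -|x j| := by
    intro j hj
    obtain ⟨hjS, hjv⟩ := (hTmem j).mp hj
    have hev : e j * v j = -x j := by
      rw [hedef]; exact div_mul_cancel₀ _ hjv
    have : (σ * e j) * (σ * (s j * v j)) = (σ * σ) * (s j * (e j * v j)) := by ring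
    rw [this, hσσ, one_mul, hev]
    have := hsx j hjS
    nlinarith [hsx j hjS]
  have habspos : ∀ j ∈ T, 0 < |x j| := by
    intro j hj
    exact abs_pos.mpr ((hS j).mp ((hTmem j).mp hj).1)
  set T' : Finset (Fin N) := T.filter (fun j => 0 < σ * e j) with hT'def
  have hT'ne : T'.Nonempty := by
    by_contra hemp
    have hpos : ∀ j ∈ T, 0 < σ * (s j * v j) := by
      intro j hj
      have hpr := hprod j hj
      have habs := habspos j hj
      have hne : ¬ (0 < σ * e j) := by
        intro h
        exact hemp ⟨j, Finset.mem_filter.mpr ⟨hj, h⟩⟩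
      push_neg at hne
      nlinarith
    have hTne : T.Nonempty := by
      obtain ⟨j, hj⟩ := hvne
      have hjS : j ∈ S := by
        by_contra h
        exact hj (hv_off j h)
      exact ⟨j, (hTmem j).mpr ⟨hjS, hj⟩⟩
    have : 0 < σ * c := by
      rw [hcT, Finset.mul_sum]
      exact Finset.sum_pos hpos hTne
    linarith
  set eps0 : ℝ := T'.inf' hT'ne (fun j => σ * e j) with heps0def
  have heps0pos : 0 < eps0 := by
    rw [heps0def]
    rw [Finset.lt_inf'_iff]
    intro j hj
    exact (Finset.mem_filter.mp hj).2
  obtain ⟨j₀, hj₀T', hj₀eq⟩ := Finset.exists_mem_eq_inf' hT'ne (fun j => σ * e j)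
  have hj₀T : j₀ ∈ T := (Finset.mem_filter.mp hj₀T').1
  have hj₀S : j₀ ∈ S := ((hTmem j₀).mp hj₀T).1
  have hj₀v : v j₀ ≠ 0 := ((hTmem j₀).mp hj₀T).2
  have hj₀x : x j₀ ≠ 0 := (hS j₀).mp hj₀S
  set eps : ℝ := σ * eps0 with hepsdef
  have hepse : eps = e j₀ := by
    rw [hepsdef, heps0def, hj₀eq, ← mul_assoc, hσσ, one_mul]
  have hxtj₀ : x j₀ + eps * v j₀ = 0 := by
    rw [hepse, hedef]
    field_simp
    ring
  -- the nonnegativity condition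
  have hnn : ∀ j, 0 ≤ |x j| + s j * (eps * v j) := by
    intro j
    by_cases hvj : v j = 0
    · rw [hvj, mul_zero, mul_zero, add_zero]; exact abs_nonneg _
    · have hjS : j ∈ S := by
        by_contra h
        exact hvj (hv_off j h)
      have hjT : j ∈ T := (hTmem j).mpr ⟨hjS, hvj⟩
      have hpr := hprod j hjT
      have habs := habspos j hjT
      have hkey : s j * (eps * v j) = eps0 * (σ * (s j * v j)) := by
        rw [hepsdef]; ring
      rw [hkey]
      by_cases hdir : 0 < σ * e j
      · have hle : eps0 ≤ σ * e j := by
          rw [heps0def]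
          exact Finset.inf'_le _ (Finset.mem_filter.mpr ⟨hjT, hdir⟩)
        have hb : σ * (s j * v j) < 0 := by nlinarith
        nlinarith
      · push_neg at hdir
        have hb : 0 < σ * (s j * v j) := by nlinarith
        nlinarith
  -- the competitor
  set xt : Fin N → ℝ := fun j => x j + eps * v j with hxtdef
  have habs_eq : ∀ j, |xt j| = |x j| + s j * (eps * v j) := by
    intro j
    by_cases hj : j ∈ S
    · have h1 : s j * (x j + eps * v j) = |x j| + s j * (eps * v j) := by
        rw [mul_add, hsx j hj]
      rcases hss j with h | h
      · rw [h, one_mul] at h1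
        have hge : 0 ≤ x j + eps * v j := by
          rw [h1]
          have h2 := hnn j
          rw [h] at h2
          exact h2
        show |x j + eps * v j| = _
        rw [abs_of_nonneg hge, h1, h]
      · rw [h, neg_one_mul] at h1
        have hle2 : x j + eps * v j ≤ 0 := by
          have h2 := hnn j
          rw [h] at h2
          linarith
        show |x j + eps * v j| = _
        rw [abs_of_nonpos hle2, h1, h]
    · have hx0 : x j = 0 := by
        by_contra h
        exact hj ((hS j).mpr h)
      have hv0 : v j = 0 := hv_off j hj
      show |x j + eps * v j| = _
      rw [hx0, hv0, mul_zero, mul_zero, add_zero, add_zero]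
  have hL : ∑ j, |xt j| = (∑ j, |x j|) + eps * c := by
    calc ∑ j, |xt j| = ∑ j, (|x j| + s j * (eps * v j)) :=
          Finset.sum_congr rfl (fun j _ => habs_eq j)
      _ = (∑ j, |x j|) + ∑ j, s j * (eps * v j) := Finset.sum_add_distrib
      _ = (∑ j, |x j|) + eps * ∑ j, s j * v j := by
          rw [Finset.mul_sum]
          congr 1
          exact Finset.sum_congr rfl (fun j _ => by ring)
      _ = (∑ j, |x j|) + eps * c := by rw [hcdef]
  have hmul : ∀ i, A.mulVec xt i = A.mulVec x i := by
    intro i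
    have h0 : ∑ j, A i j * v j = 0 := by
      have := hAv i
      simpa [Matrix.mulVec, dotProduct] using this
    show ∑ j, A i j * xt j = ∑ j, A i j * x j
    calc ∑ j, A i j * xt j = ∑ j, (A i j * x j + eps * (A i j * v j)) :=
          Finset.sum_congr rfl (fun j _ => by show A i j * (x j + eps * v j) = _; ring)
      _ = (∑ j, A i j * x j) + eps * ∑ j, A i j * v j := by
          rw [Finset.sum_add_distrib, Finset.mul_sum]
      _ = ∑ j, A i j * x j := by rw [h0, mul_zero, add_zero]
  have hobj : lassoObj lam y A xt = lassoObj lam y A x + lam * (eps * c) := by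
    unfold lassoObj
    have hq : ∑ i, (A.mulVec xt i - y i) ^ 2 = ∑ i, (A.mulVec x i - y i) ^ 2 :=
      Finset.sum_congr rfl (fun i _ => by rw [hmul i])
    rw [hq, hL]; ring
  have hεc : eps * c ≤ 0 := by
    have h : eps * c = eps0 * (σ * c) := by rw [hepsdef]; ring
    rw [h]
    exact mul_nonpos_of_nonneg_of_nonpos (le_of_lt heps0pos) hσc
  have hle : lassoObj lam y A xt ≤ lassoObj lam y A x := by
    rw [hobj]
    nlinarith
  have heq : lassoObj lam y A xt = lassoObj lam y A x := le_antisymm hle (hx xt)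
  have hxtSol : xt ∈ lassoSol lam y A := by
    intro z
    exact heq.le.trans (hx z)
  have hxtj₀' : xt j₀ = 0 := hxtj₀
  have hxtne : xt ≠ x := by
    intro h
    apply hj₀x
    rw [← h, hxtj₀']
  refine ⟨⟨xt, hxtSol, hxtne⟩, ?_⟩
  have hmem : (0 : ℝ) ∈ {δ : ℝ | 0 ≤ δ ∧
      ∃ (yt : Fin m → ℝ) (At : Matrix (Fin m) (Fin N) ℝ)
        (x' xt' : Fin N → ℝ), x' ∈ lassoSol lam y A ∧ xt' ∈ lassoSol lam yt At ∧
        (∀ i, |yt i - y i| ≤ 0) ∧ (∀ i j, |A i j - At i j| ≤ 0) ∧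
        Function.support x' ≠ Function.support xt'} := by
    refine ⟨le_refl 0, y, A, x, xt, hx, hxtSol, ?_, ?_, ?_⟩
    · intro i; simp
    · intro i j; simp
    · intro h
      have h1 : j₀ ∈ Function.support x := by
        rw [Function.mem_support]; exact hj₀x
      rw [h, Function.mem_support] at h1
      exact h1 hxtj₀'
  unfold stsp
  apply le_antisymm
  · exact csInf_le ⟨0, fun d hd => hd.1⟩ hmem
  · exact le_csInf ⟨0, hmem⟩ (fun d hd => hd.1)
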